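/- Let K : X × X → ℂ be a Carleman kernel of a bounded operator on L²(X) satisfying: (C1) for every f ∈ L²(X) the function x ↦ ∫_X K(x,y)f(y) dy is continuous on X, and (C2) the function x ↦ ∫_X |K(x,y)|² dy is continuous on X. Then the map F : X → L²(X), F(x) = K(x,·), is continuous from X to the (norm topology of the) Hilbert space L²(X). -/

import Mathlib

open MeasureTheory
open scoped ENNReal

/-- If a Carleman kernel `K` has the properties (C1): `x ↦ ∫ K(x,y) f(y) dy`
is continuous for every `f ∈ L²`, and (C2): `x ↦ ∫ |K(x,y)|² dy` is
continuous, then the map `x ↦ K(x,·)` is continuous from `X` into the Hilbert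
space `L²(X)`. -/
theorem carleman_kernel_continuous_into_L2
    {X : Type*} [TopologicalSpace X] [MeasurableSpace X]
    (μ : Measure X) (K : X → X → ℂ)
    (hK : ∀ x : X, MemLp (K x) 2 μ)
    (hC1 : ∀ f : X → ℂ, MemLp f 2 μ →
      Continuous (fun x : X => ∫ y, K x y * f y ∂μ))
    (hC2 : Continuous (fun x : X => ∫ y, ‖K x y‖ ^ 2 ∂μ)) :
    Continuous (fun x : X => (hK x).toLp (K x)) := by
  set F : X → (Lp ℂ 2 μ) := fun x => (hK x).toLp (K x) with hF
  -- norm squared equals the integral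
  have hnorm : ∀ x, ‖F x‖ ^ 2 = ∫ y, ‖K x y‖ ^ 2 ∂μ := by
    intro x
    have h1 : ‖F x‖ ^ 2 = RCLike.re (inner ℂ (F x) (F x) : ℂ) :=
      norm_sq_eq_re_inner (𝕜 := ℂ) (F x)
    rw [h1, MeasureTheory.L2.inner_def,
      ← integral_re (MeasureTheory.L2.integrable_inner (𝕜 := ℂ) (F x) (F x))]
    refine integral_congr_ae ?_
    filter_upwards [(hK x).coeFn_toLp] with a ha
    rw [ha]
    exact (norm_sq_eq_re_inner (𝕜 := ℂ) (K x a)).symm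
  -- inner product with fixed x₀
  have hinner : ∀ x₀ x, (inner ℂ (F x₀) (F x) : ℂ)
      = ∫ y, K x y * (starRingEnd ℂ) (K x₀ y) ∂μ := by
    intro x₀ x
    rw [MeasureTheory.L2.inner_def]
    refine integral_congr_ae ?_
    filter_upwards [(hK x).coeFn_toLp, (hK x₀).coeFn_toLp] with a ha ha₀
    rw [ha, ha₀]
    simp [RCLike.inner_apply, mul_comm]
  rw [continuous_iff_continuousAt]
  intro x₀
  have hconjmem : MemLp (fun y => (starRingEnd ℂ) (K x₀ y)) 2 μ := by
    refine MemLp.of_le (hK x₀)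
      (RCLike.continuous_conj.comp_aestronglyMeasurable (hK x₀).1) ?_
    filter_upwards with a; simp
  have hIc : Continuous (fun x => ∫ y, K x y * (starRingEnd ℂ) (K x₀ y) ∂μ) :=
    hC1 _ hconjmem
  -- show tendsto of squared distance to 0
  have key : Filter.Tendsto (fun x => ‖F x - F x₀‖ ^ 2) (nhds x₀) (nhds 0) := by
    have heq : ∀ x, ‖F x - F x₀‖ ^ 2
        = ‖F x‖ ^ 2 - 2 * RCLike.re (inner ℂ (F x) (F x₀) : ℂ) + ‖F x₀‖ ^ 2 :=
      fun x => @norm_sub_sq ℂ _ _ _ _ (F x) (F x₀)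
    have heq2 : ∀ x, ‖F x - F x₀‖ ^ 2
        = (∫ y, ‖K x y‖ ^ 2 ∂μ)
          - 2 * RCLike.re (∫ y, K x y * (starRingEnd ℂ) (K x₀ y) ∂μ)
          + ∫ y, ‖K x₀ y‖ ^ 2 ∂μ := by
      intro x
      rw [heq, hnorm, hnorm, ← hinner x₀ x, inner_re_symm]
    simp_rw [heq2]
    have hcont : Continuous (fun x =>
        (∫ y, ‖K x y‖ ^ 2 ∂μ)
          - 2 * RCLike.re (∫ y, K x y * (starRingEnd ℂ) (K x₀ y) ∂μ)
          + ∫ y, ‖K x₀ y‖ ^ 2 ∂μ) := by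
      exact ((hC2.sub ((continuous_const.mul (RCLike.continuous_re.comp hIc)))).add
        continuous_const)
    have h0 : (∫ y, ‖K x₀ y‖ ^ 2 ∂μ)
          - 2 * RCLike.re (∫ y, K x₀ y * (starRingEnd ℂ) (K x₀ y) ∂μ)
          + ∫ y, ‖K x₀ y‖ ^ 2 ∂μ = 0 := by
      rw [← hinner x₀ x₀, ← hnorm x₀]
      have : RCLike.re (inner ℂ (F x₀) (F x₀) : ℂ) = ‖F x₀‖ ^ 2 :=
        (norm_sq_eq_re_inner (𝕜 := ℂ) (F x₀)).symm
      rw [this]; ring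
    have := hcont.continuousAt (x := x₀)
    rw [ContinuousAt, h0] at this
    exact this
  rw [ContinuousAt]
  rw [tendsto_iff_dist_tendsto_zero]
  simp_rw [dist_eq_norm]
  have h := (Real.continuous_sqrt.tendsto 0).comp key
  simp only [Real.sqrt_zero] at h
  refine h.congr fun x => ?_
  simp [Function.comp, Real.sqrt_sq (norm_nonneg _)]
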